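/- Let C, S, D satisfy the Jacobi system S' = C·D, C' = -S·D, D' = -(1/2)·S·C with S(0) = 0, C(0) = 1, D(0) = 1. Then there exists K > 0 such that C(K) = 0 and C(x) > 0 for all x ∈ [0, K). -/

import Mathlib

theorem stmt_14 (S C D : ℝ → ℝ)
    (hS : Differentiable ℝ S) (hC : Differentiable ℝ C) (hD : Differentiable ℝ D)
    (hS' : ∀ x, deriv S x = C x * D x)
    (hC' : ∀ x, deriv C x = -(S x * D x))
    (hD' : ∀ x, deriv D x = -(1 / 2 * (S x * C x)))
    (hS0 : S 0 = 0) (hC0 : C 0 = 1) (hD0 : D 0 = 1) :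
    ∃ K > 0, C K = 0 ∧ ∀ x ∈ Set.Ico (0 : ℝ) K, 0 < C x := by
  -- invariant 1 : S^2 + C^2 = 1
  have inv1 : ∀ x, S x ^ 2 + C x ^ 2 = 1 := by
    have key : ∀ x, HasDerivAt (fun y => S y ^ 2 + C y ^ 2) 0 x := by
      intro x
      have h1 := ((hS x).hasDerivAt.pow 2).add ((hC x).hasDerivAt.pow 2)
      refine h1.congr_deriv ?_
      rw [hS' x, hC' x]; ring
    have hconst := is_const_of_deriv_eq_zero
      (f := fun y => S y ^ 2 + C y ^ 2)
      (fun x => (key x).differentiableAt) (fun x => (key x).deriv)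
    intro x
    have := hconst x 0
    simp only [hS0, hC0] at this
    linarith [this]
  -- invariant 2 : D^2 + (1/2) S^2 = 1
  have inv2 : ∀ x, D x ^ 2 + 1 / 2 * S x ^ 2 = 1 := by
    have key : ∀ x, HasDerivAt (fun y => D y ^ 2 + 1 / 2 * S y ^ 2) 0 x := by
      intro x
      have h1 := ((hD x).hasDerivAt.pow 2).add (((hS x).hasDerivAt.pow 2).const_mul (1 / 2))
      refine h1.congr_deriv ?_
      rw [hS' x, hD' x]; ring
    have hconst := is_const_of_deriv_eq_zero
      (f := fun y => D y ^ 2 + 1 / 2 * S y ^ 2)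
      (fun x => (key x).differentiableAt) (fun x => (key x).deriv)
    intro x
    have := hconst x 0
    simp only [hS0, hD0] at this
    linarith [this]
  have hSsq : ∀ x, S x ^ 2 ≤ 1 := fun x => by nlinarith [sq_nonneg (C x), inv1 x]
  have hDsq : ∀ x, 1 / 2 ≤ D x ^ 2 := fun x => by nlinarith [hSsq x, inv2 x]
  -- D is everywhere positive, in fact ≥ 1/2
  have hDpos : ∀ x, 1 / 2 ≤ D x := by
    intro x
    by_contra h
    push_neg at h
    rcases lt_or_ge (D x) 0 with hneg | hnn
    · -- D x < 0, IVT gives a zero of D, contradicting D^2 ≥ 1/2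
      have hcont : ContinuousOn D (Set.uIcc 0 x) := hD.continuous.continuousOn
      have : (0 : ℝ) ∈ Set.uIcc (D 0) (D x) := by
        rw [hD0]
        exact Set.mem_uIcc.2 (Or.inr ⟨le_of_lt hneg, zero_le_one⟩)
      obtain ⟨c, _, hc⟩ := intermediate_value_uIcc hcont this
      have := hDsq c
      rw [hc] at this
      norm_num at this
    · nlinarith [hDsq x]
  -- There exists a nonnegative zero of C
  have hzero : ∃ x, 0 ≤ x ∧ C x = 0 := by
    by_contra hno
    push_neg at hno
    -- then C > 0 on [0, ∞)
    have hCpos : ∀ x, 0 ≤ x → 0 < C x := by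
      intro x hx
      rcases lt_trichotomy (C x) 0 with hneg | hz | hpos
      · have hcont : ContinuousOn C (Set.uIcc 0 x) := hC.continuous.continuousOn
        have hmem : (0 : ℝ) ∈ Set.uIcc (C 0) (C x) := by
          rw [hC0]
          exact Set.mem_uIcc.2 (Or.inr ⟨le_of_lt hneg, zero_le_one⟩)
        obtain ⟨c, hcmem, hc⟩ := intermediate_value_uIcc hcont hmem
        rw [Set.uIcc_of_le hx] at hcmem
        exact absurd hc (hno c hcmem.1)
      · exact absurd hz (hno x hx)
      · exact hpos
    -- S strictly increasing on [0, ∞)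
    have hSmono : StrictMonoOn S (Set.Ici (0 : ℝ)) := by
      apply strictMonoOn_of_deriv_pos (convex_Ici 0) hS.continuous.continuousOn
      intro x hx
      rw [interior_Ici] at hx
      rw [hS' x]
      exact mul_pos (hCpos x (le_of_lt hx)) (lt_of_lt_of_le (by norm_num) (hDpos x))
    have hS1 : 0 < S 1 := by
      have := hSmono (Set.self_mem_Ici) (by norm_num : (1:ℝ) ∈ Set.Ici (0:ℝ)) one_pos
      rwa [hS0] at this
    set b : ℝ := S 1 * (1 / 2) with hb
    have hbpos : 0 < b := by positivity
    -- g = C + b * id is antitone on [1, ∞)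
    have hg : AntitoneOn (fun y => C y + b * y) (Set.Ici (1 : ℝ)) := by
      apply antitoneOn_of_deriv_nonpos (convex_Ici 1)
        (Continuous.continuousOn (hC.continuous.add (continuous_const.mul continuous_id)))
      · intro x _
        exact ((hC x).add ((differentiable_id.const_mul b) x)).differentiableWithinAt
      · intro x hx
        rw [interior_Ici] at hx
        have hd : HasDerivAt (fun y => C y + b * y) (deriv C x + b) x := by
          have h2 := (hC x).hasDerivAt.add ((hasDerivAt_id x).const_mul b)
          rw [mul_one] at h2
          exact h2
        change deriv (fun y => C y + b * y) x ≤ 0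
        rw [hd.deriv, hC' x]
        have hx1 : 1 < x := hx
        have hSx : S 1 ≤ S x := le_of_lt (hSmono (by norm_num)
          (Set.mem_Ici.2 (by linarith)) hx1)
        have hDx := hDpos x
        have : b ≤ S x * D x := by
          rw [hb]
          apply mul_le_mul hSx hDx (by norm_num) (by linarith [hSsq x, hS1])
        linarith
    -- evaluate at large x
    have hq : 0 < (C 1 + 1) / b := div_pos (by linarith [hCpos 1 zero_le_one]) hbpos
    have hM1 : (1 : ℝ) ≤ 1 + (C 1 + 1) / b := by linarith
    have := hg (Set.self_mem_Ici) (Set.mem_Ici.2 hM1) hM1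
    simp only at this
    have hCM : 0 < C (1 + (C 1 + 1) / b) := hCpos _ (by linarith)
    have hbM : b * (1 + (C 1 + 1) / b) = b + (C 1 + 1) := by
      field_simp
    nlinarith
  -- Take K = inf of the zero set
  obtain ⟨z, hz0, hzC⟩ := hzero
  set A : Set ℝ := {x | 0 ≤ x ∧ C x = 0} with hA
  have hAne : A.Nonempty := ⟨z, hz0, hzC⟩
  have hAbdd : BddBelow A := ⟨0, fun x hx => hx.1⟩
  have hAclosed : IsClosed A := by
    have : A = Set.Ici 0 ∩ C ⁻¹' {0} := by
      ext x; simp [hA, Set.mem_Ici]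
    rw [this]
    exact isClosed_Ici.inter (isClosed_singleton.preimage hC.continuous)
  set K := sInf A with hK
  have hKmem : K ∈ A := hAclosed.csInf_mem hAne hAbdd
  have hK0 : 0 ≤ K := hKmem.1
  have hKC : C K = 0 := hKmem.2
  have hKpos : 0 < K := by
    rcases eq_or_lt_of_le hK0 with h | h
    · exfalso; rw [← h] at hKC; rw [hC0] at hKC; norm_num at hKC
    · exact h
  refine ⟨K, hKpos, hKC, ?_⟩
  intro x hx
  obtain ⟨hx0, hxK⟩ := hx
  rcases lt_trichotomy (C x) 0 with hneg | hz | hpos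
  · -- IVT gives a zero below K, contradiction
    have hcont : ContinuousOn C (Set.uIcc 0 x) := hC.continuous.continuousOn
    have hmem : (0 : ℝ) ∈ Set.uIcc (C 0) (C x) := by
      rw [hC0]
      exact Set.mem_uIcc.2 (Or.inr ⟨le_of_lt hneg, zero_le_one⟩)
    obtain ⟨c, hcmem, hc⟩ := intermediate_value_uIcc hcont hmem
    rw [Set.uIcc_of_le hx0] at hcmem
    have : K ≤ c := csInf_le hAbdd ⟨hcmem.1, hc⟩
    linarith [hcmem.2]
  · exfalso
    have : K ≤ x := csInf_le hAbdd ⟨hx0, hz⟩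
    linarith
  · exact hpos
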